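/- (Uniqueness conclusion of Theorem 1.) Let X ⊆ ℝⁿ with 0 ∈ X, let u_i : ℝⁿ → ℝᵐ and w_i : ℝⁿ → ℝ^q be continuous policies, and let V : ℝⁿ → ℝ and W : ℝⁿ → ℝ be continuously differentiable with V(0) = W(0) = 0. Suppose that V and W each satisfy the off-policy integral identity along every trajectory (x, u, w) remaining in X (for all continuous inputs u, w and all subintervals of the trajectory's interval of definition). Suppose moreover that for every x̄ ∈ X there exist T ≥ 0 and a differentiable closed-loop trajectory x : [0, T] → X with x'(τ) = f(x(τ)) + g(x(τ))·u_i(x(τ)) + k(x(τ))·w_i(x(τ)) for all τ ∈ [0, T], x(0) = 0 and x(T) = x̄. Then V = W on X; i.e., the solution of the off-policy integral equation is unique and agrees with the solution of the linear PDE (LFE). -/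

import Mathlib

open Matrix MeasureTheory

/-- Matrix–vector multiplication, valued in Euclidean space. -/
noncomputable def mv {a b : ℕ} (M : Matrix (Fin a) (Fin b) ℝ)
    (v : EuclideanSpace ℝ (Fin b)) : EuclideanSpace ℝ (Fin a) :=
  WithLp.toLp 2 (M.mulVec v)

/-- `V` satisfies the linear PDE (LFE) for the policies `ui, wi` at the point `x`:
`⟨∇V(x), f(x) + g(x) uᵢ(x) + k(x) wᵢ(x)⟩ + ‖h(x)‖² + ⟨uᵢ(x), R uᵢ(x)⟩ - γ²‖wᵢ(x)‖² = 0`. -/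
def LFEAt {n m q p : ℕ}
    (f : EuclideanSpace ℝ (Fin n) → EuclideanSpace ℝ (Fin n))
    (g : EuclideanSpace ℝ (Fin n) → Matrix (Fin n) (Fin m) ℝ)
    (k : EuclideanSpace ℝ (Fin n) → Matrix (Fin n) (Fin q) ℝ)
    (h : EuclideanSpace ℝ (Fin n) → EuclideanSpace ℝ (Fin p))
    (R : Matrix (Fin m) (Fin m) ℝ) (γ : ℝ)
    (ui : EuclideanSpace ℝ (Fin n) → EuclideanSpace ℝ (Fin m))
    (wi : EuclideanSpace ℝ (Fin n) → EuclideanSpace ℝ (Fin q))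
    (V : EuclideanSpace ℝ (Fin n) → ℝ)
    (x : EuclideanSpace ℝ (Fin n)) : Prop :=
  (inner ℝ (gradient V x) (f x + mv (g x) (ui x) + mv (k x) (wi x)) : ℝ)
    + ‖h x‖^2 + (inner ℝ (ui x) (mv R (ui x)) : ℝ) - γ^2 * ‖wi x‖^2 = 0

/-- `V` satisfies the off-policy integral identity (equation (4.3)) for the policies
`ui, wi` along the trajectory `(x, u, w)` on the interval `[t₁, t₂]`. -/
noncomputable def OffPolicyId {n m q p : ℕ}
    (g : EuclideanSpace ℝ (Fin n) → Matrix (Fin n) (Fin m) ℝ)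
    (k : EuclideanSpace ℝ (Fin n) → Matrix (Fin n) (Fin q) ℝ)
    (h : EuclideanSpace ℝ (Fin n) → EuclideanSpace ℝ (Fin p))
    (R : Matrix (Fin m) (Fin m) ℝ) (γ : ℝ)
    (ui : EuclideanSpace ℝ (Fin n) → EuclideanSpace ℝ (Fin m))
    (wi : EuclideanSpace ℝ (Fin n) → EuclideanSpace ℝ (Fin q))
    (V : EuclideanSpace ℝ (Fin n) → ℝ)
    (x : ℝ → EuclideanSpace ℝ (Fin n))
    (u : ℝ → EuclideanSpace ℝ (Fin m))
    (w : ℝ → EuclideanSpace ℝ (Fin q))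
    (t₁ t₂ : ℝ) : Prop :=
  (∫ τ in t₁..t₂, (inner ℝ (gradient V (x τ)) (mv (g (x τ)) (u τ - ui (x τ))) : ℝ))
    + (∫ τ in t₁..t₂, (inner ℝ (gradient V (x τ)) (mv (k (x τ)) (w τ - wi (x τ))) : ℝ))
    + V (x t₁) - V (x t₂)
    = ∫ τ in t₁..t₂,
        (‖h (x τ)‖^2 + (inner ℝ (ui (x τ)) (mv R (ui (x τ))) : ℝ) - γ^2 * ‖wi (x τ)‖^2)

/-- **Uniqueness conclusion of Theorem 1.**  If `V` and `W` are continuously differentiable,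
vanish at the origin, satisfy the off-policy integral identity along every trajectory
remaining in `X`, and every point of `X` is reachable from the origin along a closed-loop
trajectory in `X`, then `V = W` on `X`. -/
theorem off_policy_solution_unique {n m q p : ℕ}
    (f : EuclideanSpace ℝ (Fin n) → EuclideanSpace ℝ (Fin n))
    (g : EuclideanSpace ℝ (Fin n) → Matrix (Fin n) (Fin m) ℝ)
    (k : EuclideanSpace ℝ (Fin n) → Matrix (Fin n) (Fin q) ℝ)
    (h : EuclideanSpace ℝ (Fin n) → EuclideanSpace ℝ (Fin p))
    (R : Matrix (Fin m) (Fin m) ℝ) (hR : R.PosDef)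
    (γ : ℝ) (hγ : 0 < γ)
    (X : Set (EuclideanSpace ℝ (Fin n))) (hX0 : (0 : EuclideanSpace ℝ (Fin n)) ∈ X)
    (ui : EuclideanSpace ℝ (Fin n) → EuclideanSpace ℝ (Fin m)) (hui : Continuous ui)
    (wi : EuclideanSpace ℝ (Fin n) → EuclideanSpace ℝ (Fin q)) (hwi : Continuous wi)
    (V W : EuclideanSpace ℝ (Fin n) → ℝ)
    (hV : ContDiff ℝ 1 V) (hW : ContDiff ℝ 1 W)
    (hV0 : V 0 = 0) (hW0 : W 0 = 0)
    (hIdV : ∀ (x : ℝ → EuclideanSpace ℝ (Fin n)) (u : ℝ → EuclideanSpace ℝ (Fin m))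
        (w : ℝ → EuclideanSpace ℝ (Fin q)) (t₁ t₂ : ℝ), t₁ ≤ t₂ →
      ContinuousOn u (Set.Icc t₁ t₂) → ContinuousOn w (Set.Icc t₁ t₂) →
      (∀ τ ∈ Set.Icc t₁ t₂, x τ ∈ X) →
      (∀ τ ∈ Set.Icc t₁ t₂, HasDerivAt x
        (f (x τ) + mv (g (x τ)) (u τ) + mv (k (x τ)) (w τ)) τ) →
      OffPolicyId g k h R γ ui wi V x u w t₁ t₂)
    (hIdW : ∀ (x : ℝ → EuclideanSpace ℝ (Fin n)) (u : ℝ → EuclideanSpace ℝ (Fin m))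
        (w : ℝ → EuclideanSpace ℝ (Fin q)) (t₁ t₂ : ℝ), t₁ ≤ t₂ →
      ContinuousOn u (Set.Icc t₁ t₂) → ContinuousOn w (Set.Icc t₁ t₂) →
      (∀ τ ∈ Set.Icc t₁ t₂, x τ ∈ X) →
      (∀ τ ∈ Set.Icc t₁ t₂, HasDerivAt x
        (f (x τ) + mv (g (x τ)) (u τ) + mv (k (x τ)) (w τ)) τ) →
      OffPolicyId g k h R γ ui wi W x u w t₁ t₂)
    (hReach : ∀ xbar ∈ X, ∃ T : ℝ, 0 ≤ T ∧ ∃ x : ℝ → EuclideanSpace ℝ (Fin n),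
      (∀ τ ∈ Set.Icc (0:ℝ) T, x τ ∈ X ∧ HasDerivAt x
        (f (x τ) + mv (g (x τ)) (ui (x τ)) + mv (k (x τ)) (wi (x τ))) τ)
      ∧ x 0 = 0 ∧ x T = xbar) :
    ∀ xbar ∈ X, V xbar = W xbar := by
  intro xbar hxbar
  obtain ⟨T, hT, x, hx, hx0, hxT⟩ := hReach xbar hxbar
  have hmem : ∀ τ ∈ Set.Icc (0:ℝ) T, x τ ∈ X := fun τ hτ => (hx τ hτ).1
  have hderiv : ∀ τ ∈ Set.Icc (0:ℝ) T, HasDerivAt x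
      (f (x τ) + mv (g (x τ)) ((ui ∘ x) τ) + mv (k (x τ)) ((wi ∘ x) τ)) τ :=
    fun τ hτ => (hx τ hτ).2
  have hxc : ContinuousOn x (Set.Icc (0:ℝ) T) := fun τ hτ =>
    ((hx τ hτ).2.continuousAt).continuousWithinAt
  have huc : ContinuousOn (ui ∘ x) (Set.Icc (0:ℝ) T) := hui.comp_continuousOn hxc
  have hwc : ContinuousOn (wi ∘ x) (Set.Icc (0:ℝ) T) := hwi.comp_continuousOn hxc
  have key : ∀ V₀ : EuclideanSpace ℝ (Fin n) → ℝ,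
      OffPolicyId g k h R γ ui wi V₀ x (ui ∘ x) (wi ∘ x) 0 T →
      V₀ (x 0) - V₀ (x T)
        = ∫ τ in (0:ℝ)..T,
            (‖h (x τ)‖^2 + (inner ℝ (ui (x τ)) (mv R (ui (x τ))) : ℝ)
              - γ^2 * ‖wi (x τ)‖^2) := by
    intro V₀ hId
    unfold OffPolicyId at hId
    simp only [Function.comp, sub_self] at hId
    have hz : ∀ (a : ℕ) (M : EuclideanSpace ℝ (Fin n) → Matrix (Fin n) (Fin a) ℝ) τ,
        mv (M (x τ)) (0 : EuclideanSpace ℝ (Fin a)) = 0 := by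
      intro a M τ
      simp [mv, Matrix.mulVec_zero]
    rw [show (∫ τ in (0:ℝ)..T,
          (inner ℝ (gradient V₀ (x τ)) (mv (g (x τ)) 0) : ℝ)) = 0 by
        simp [hz m g],
      show (∫ τ in (0:ℝ)..T,
          (inner ℝ (gradient V₀ (x τ)) (mv (k (x τ)) 0) : ℝ)) = 0 by
        simp [hz q k]] at hId
    linarith [hId]
  have hVeq := key V (hIdV x (ui ∘ x) (wi ∘ x) 0 T hT huc hwc hmem hderiv)
  have hWeq := key W (hIdW x (ui ∘ x) (wi ∘ x) 0 T hT huc hwc hmem hderiv)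
  rw [hx0, hV0] at hVeq
  rw [hx0, hW0] at hWeq
  rw [← hxT]
  linarith
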